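/- Let U₁, U₂ be closed linear subspaces of a real Hilbert space H and let T = (1/2)(Id + R_{U₂} R_{U₁}) be the Douglas–Rachford operator. Then Fix T = Fix(R_{U₂} R_{U₁}) = (U₁ ∩ U₂) ⊕ (U₁^⊥ ∩ U₂^⊥). -/

import Mathlib

/-- For closed linear subspaces `U₁, U₂` of a real Hilbert space and the Douglas–Rachford
operator `T = (1/2)(Id + R_{U₂} R_{U₁})`,
`Fix T = Fix (R_{U₂} R_{U₁}) = (U₁ ⊓ U₂) ⊕ (U₁ᗮ ⊓ U₂ᗮ)`. -/
theorem fix_douglasRachford {H : Type*} [NormedAddCommGroup H] [InnerProductSpace ℝ H]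
    [CompleteSpace H] (U₁ U₂ : Submodule ℝ H)
    [U₁.HasOrthogonalProjection] [U₂.HasOrthogonalProjection]
    (R₁ R₂ T : H →L[ℝ] H)
    (hR₁ : R₁ = (2 : ℝ) • (U₁.subtypeL ∘L U₁.orthogonalProjectionOnto) - 1)
    (hR₂ : R₂ = (2 : ℝ) • (U₂.subtypeL ∘L U₂.orthogonalProjectionOnto) - 1)
    (hT : T = (1 / 2 : ℝ) • (1 + R₂ ∘L R₁)) :
    LinearMap.ker ((1 - T : H →L[ℝ] H) : H →ₗ[ℝ] H) = LinearMap.ker ((1 - R₂ ∘L R₁ : H →L[ℝ] H) : H →ₗ[ℝ] H) ∧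
      LinearMap.ker ((1 - T : H →L[ℝ] H) : H →ₗ[ℝ] H) = (U₁ ⊓ U₂) ⊔ (U₁ᗮ ⊓ U₂ᗮ) ∧
      (U₁ ⊓ U₂) ⊓ (U₁ᗮ ⊓ U₂ᗮ) = ⊥ := by
  have hR₁x : ∀ x : H, R₁ x = (2 : ℝ) • U₁.starProjection x - x := by
    intro x; simp [hR₁]
  have hR₂x : ∀ x : H, R₂ x = (2 : ℝ) • U₂.starProjection x - x := by
    intro x; simp [hR₂]
  have hinv : ∀ y : H, R₂ (R₂ y) = y := by
    intro y
    rw [hR₂x, hR₂x, map_sub, map_smul,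
      Submodule.starProjection_eq_self_iff.mpr (Submodule.starProjection_apply_mem _ _)]
    push_cast
    module
  -- fixed points of R₂ ∘ R₁ are exactly points where the two projections agree
  have hfix : ∀ x : H, R₂ (R₁ x) = x ↔
      U₁.starProjection x = U₂.starProjection x := by
    intro x
    constructor
    · intro h
      have h2 : R₁ x = R₂ x := by
        have := congrArg R₂ h
        rwa [hinv] at this
      rw [hR₁x, hR₂x, sub_left_inj] at h2
      exact smul_right_injective H two_ne_zero h2
    · intro h
      have h2 : R₁ x = R₂ x := by rw [hR₁x, hR₂x, h]
      rw [h2, hinv]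
  -- ker (1 - T) = ker (1 - R₂ ∘L R₁)
  have hker : ∀ x : H, x ∈ LinearMap.ker ((1 - T : H →L[ℝ] H) : H →ₗ[ℝ] H) ↔ R₂ (R₁ x) = x := by
    intro x
    simp only [LinearMap.mem_ker, ContinuousLinearMap.coe_coe, ContinuousLinearMap.coe_sub', Pi.sub_apply,
      ContinuousLinearMap.one_apply, sub_eq_zero, hT]
    rw [ContinuousLinearMap.smul_apply, ContinuousLinearMap.add_apply,
      ContinuousLinearMap.one_apply, ContinuousLinearMap.comp_apply]
    constructor
    · intro h
      have := congrArg (fun y : H => (2 : ℝ) • y) h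
      simp only [smul_smul] at this
      norm_num at this
      linear_combination (norm := module) this.symm
    · intro h
      rw [h]
      module
  refine ⟨?_, ?_, ?_⟩
  · ext x
    rw [hker]
    simp only [LinearMap.mem_ker, ContinuousLinearMap.coe_coe, ContinuousLinearMap.coe_sub', Pi.sub_apply,
      ContinuousLinearMap.one_apply, ContinuousLinearMap.coe_comp', Function.comp_apply,
      sub_eq_zero]
    exact eq_comm
  · ext x
    rw [hker, hfix]
    constructor
    · intro h
      have hp : U₁.starProjection x ∈ U₁ ⊓ U₂ := by
        refine ⟨Submodule.starProjection_apply_mem _ _, ?_⟩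
        rw [h]; exact Submodule.starProjection_apply_mem _ _
      have hq : x - U₁.starProjection x ∈ U₁ᗮ ⊓ U₂ᗮ := by
        refine ⟨Submodule.sub_starProjection_mem_orthogonal x, ?_⟩
        rw [h]
        exact Submodule.sub_starProjection_mem_orthogonal x
      have : x = U₁.starProjection x + (x - U₁.starProjection x) := by
        abel
      rw [this]
      exact Submodule.add_mem_sup hp hq
    · intro h
      obtain ⟨a, ha, b, hb, rfl⟩ := Submodule.mem_sup.mp h
      rw [map_add, map_add]
      push_cast
      rw [Submodule.starProjection_eq_self_iff.mpr ha.1, Submodule.starProjection_eq_self_iff.mpr ha.2,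
        (Submodule.starProjection_apply_eq_zero_iff _).mpr hb.1,
        (Submodule.starProjection_apply_eq_zero_iff _).mpr hb.2]
  · rw [eq_bot_iff]
    intro x hx
    have h1 : x ∈ U₁ ⊓ U₁ᗮ := ⟨hx.1.1, hx.2.1⟩
    simpa using (Submodule.orthogonal_disjoint U₁).le_bot h1
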